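/- Let k° be a height-one valuation ring with fraction field k, S = Spec(k°), η = Spec(k). The class of τ-coverings—η-étale S-morphisms f : Y → X of admissible (flat, finite-type) S-schemes such that every admissible valuation α : Spec(R) → X with algebraically closed Frac(R) lifts to Y—is stable under composition and under strict base change (W ↦ (Y ×_X W)^st along admissible W → X), and hence forms a Grothendieck (pre)topology on admissible S-schemes. -/

import Mathlib

open AlgebraicGeometry CategoryTheory CategoryTheory.Limits
open scoped NNReal

universe u

noncomputable section

namespace Altered

variable {k : Type u} [Field k] (v : Valuation k ℝ≥0)

/-- S = Spec k°. -/
abbrev BaseS : Scheme.{u} := Spec (CommRingCat.of v.integer)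

/-- The open immersion η = Spec k → S. -/
abbrev genPtTo : Spec (CommRingCat.of k) ⟶ BaseS v :=
  Spec.map (CommRingCat.ofHom (algebraMap v.integer k))

/-- A morphism of schemes is flat if all the induced maps of stalks are flat. -/
def SchemeFlat {X Y : Scheme.{u}} (f : X ⟶ Y) : Prop := ∀ x, (f.stalkMap x).hom.Flat

/-- An S-scheme is admissible if it is flat and of finite type over S. -/
structure AdmissibleOver {X : Scheme.{u}} (sX : X ⟶ BaseS v) : Prop where
  flat : SchemeFlat sX
  locallyOfFiniteType : LocallyOfFiniteType sX
  quasiCompact : QuasiCompact sX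

/-- The generic fiber X_η = X ×_S η of an S-scheme. -/
abbrev genFib {X : Scheme.{u}} (sX : X ⟶ BaseS v) : Scheme.{u} :=
  pullback sX (genPtTo v)

/-- The projection X_η → X. -/
abbrev genFibTo {X : Scheme.{u}} (sX : X ⟶ BaseS v) : genFib v sX ⟶ X :=
  pullback.fst sX (genPtTo v)

/-- f : Y → X is an η-isomorphism: its base change to the generic fiber
Y ×_X X_η → X_η is an isomorphism. -/
def IsEtaIso {X Y : Scheme.{u}} (sX : X ⟶ BaseS v) (f : Y ⟶ X) : Prop :=
  IsIso (pullback.snd f (genFibTo v sX))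

/-- f : Y → X is η-étale: its base change Y ×_X X_η → X_η is étale. -/
def IsEtaEtale {X Y : Scheme.{u}} (sX : X ⟶ BaseS v) (f : Y ⟶ X) : Prop :=
  IsEtale (pullback.snd f (genFibTo v sX))

/-- α : Spec R → X (R a valuation ring) is an admissible valuation: it takes the
generic point of Spec R into the generic fiber X_η. -/
def IsAdmVal {X : Scheme.{u}} (sX : X ⟶ BaseS v)
    {R : Type u} [CommRing R] [IsDomain R] [ValuationRing R]
    (α : Spec (CommRingCat.of R) ⟶ X) : Prop :=
  ∃ γ : Spec (CommRingCat.of (FractionRing R)) ⟶ genFib v sX,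
    γ ≫ genFibTo v sX =
      Spec.map (CommRingCat.ofHom (algebraMap R (FractionRing R))) ≫ α

/-- f : Y → X is a τ-covering (a covering for the η-étale S-admissible topology):
it is an η-étale S-morphism and every admissible valuation of X with algebraically
closed fraction field lifts to an admissible valuation of Y. -/
structure IsTauCovering {X Y : Scheme.{u}} (sX : X ⟶ BaseS v) (sY : Y ⟶ BaseS v)
    (f : Y ⟶ X) : Prop where
  over' : f ≫ sX = sY
  etaEtale : IsEtaEtale v sX f
  lifts : ∀ (R : Type u) [CommRing R] [IsDomain R] [ValuationRing R],
    IsAlgClosed (FractionRing R) →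
    ∀ α : Spec (CommRingCat.of R) ⟶ X, IsAdmVal v sX α →
      ∃ β : Spec (CommRingCat.of R) ⟶ Y, β ≫ f = α ∧ IsAdmVal v sY β

end Altered

namespace Altered

/-!
STATEMENT 14: τ-coverings of admissible S-schemes are stable under composition and
under strict base change (W ↦ (Y ×_X W)^st), and hence form a Grothendieck
(pre)topology on admissible S-schemes.  The strict transform (Y ×_X W)^st
(the schematic closure of the generic fiber in Y ×_X W) is characterized as a
closed subscheme Z → Y ×_X W that is flat over S and an isomorphism on generic
fibers.
-/


section Helpers

lemma isEtale_snd_comp' {A B C D : Scheme.{u}} (f : A ⟶ B) (h : C ⟶ B) (ψ : D ⟶ C)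
    (H : IsEtale (pullback.snd f h)) : IsEtale (pullback.snd f (ψ ≫ h)) := by
  have h1 : Etale (pullback.snd (pullback.snd f h) ψ) :=
    by haveI : Etale (pullback.snd f h) := H; infer_instance
  rw [← pullbackLeftPullbackSndIso_inv_snd_snd f h ψ]
  delta IsEtale; infer_instance

lemma isIso_snd_comp' {A B C D : Scheme.{u}} (f : A ⟶ B) (h : C ⟶ B) (ψ : D ⟶ C)
    (H : IsIso (pullback.snd f h)) : IsIso (pullback.snd f (ψ ≫ h)) := by
  rw [← pullbackLeftPullbackSndIso_inv_snd_snd f h ψ]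
  infer_instance

end Helpers

theorem tauCoverings_stable_under_composition_and_strict_base_change
    {k : Type u} [Field k] (v : Valuation k ℝ≥0)
    (hv : ∃ y : k, v y ≠ 0 ∧ v y ≠ 1) :
    -- stability under composition
    (∀ {X Y Z : Scheme.{u}} (sX : X ⟶ BaseS v) (sY : Y ⟶ BaseS v)
        (sZ : Z ⟶ BaseS v),
      AdmissibleOver v sX → AdmissibleOver v sY → AdmissibleOver v sZ →
      ∀ (f : Y ⟶ X) (g : Z ⟶ Y),
        IsTauCovering v sX sY f → IsTauCovering v sY sZ g →
        IsTauCovering v sX sZ (g ≫ f)) ∧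
    -- stability under strict base change
    (∀ {X Y W Z : Scheme.{u}} (sX : X ⟶ BaseS v) (sY : Y ⟶ BaseS v),
      AdmissibleOver v sX → AdmissibleOver v sY →
      ∀ (f : Y ⟶ X), IsTauCovering v sX sY f →
      ∀ (w : W ⟶ X), AdmissibleOver v (w ≫ sX) →
      ∀ (c : Z ⟶ pullback f w), IsClosedImmersion c →
        -- Z is the strict transform: flat over S and an η-isomorphism onto Y ×_X W
        SchemeFlat (c ≫ pullback.snd f w ≫ w ≫ sX) →
        IsEtaIso v (pullback.snd f w ≫ w ≫ sX) c →
        IsTauCovering v (w ≫ sX) (c ≫ pullback.snd f w ≫ w ≫ sX)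
          (c ≫ pullback.snd f w)) := by
  constructor
  · -- composition
    intro X Y Z sX sY sZ hX hY hZ f g hf hg
    refine ⟨by rw [Category.assoc, hf.over', hg.over'], ?_, ?_⟩
    · -- η-étale
      have hcomm : pullback.fst f (genFibTo v sX) ≫ sY =
          (pullback.snd f (genFibTo v sX) ≫ pullback.snd sX (genPtTo v)) ≫ genPtTo v := by
        rw [← hf.over', ← Category.assoc, pullback.condition, Category.assoc, Category.assoc,
          pullback.condition]
      set φ : pullback f (genFibTo v sX) ⟶ genFib v sY :=
        pullback.lift (pullback.fst f (genFibTo v sX))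
          (pullback.snd f (genFibTo v sX) ≫ pullback.snd sX (genPtTo v)) hcomm with hφdef
      have hφ : φ ≫ genFibTo v sY = pullback.fst f (genFibTo v sX) := pullback.lift_fst _ _ _
      have h2 : Etale (pullback.snd g (pullback.fst f (genFibTo v sX))) := by
        rw [← hφ]; exact isEtale_snd_comp' _ _ _ hg.etaEtale
      have h3 : Etale (pullback.snd f (genFibTo v sX)) := hf.etaEtale
      show IsEtale (pullback.snd (g ≫ f) (genFibTo v sX))
      rw [← pullbackRightPullbackFstIso_inv_snd_snd f (genFibTo v sX) g]
      delta IsEtale; infer_instance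
    · -- lifting of admissible valuations
      intro R _ _ _ hac α hα
      obtain ⟨β, hβf, hβ⟩ := hf.lifts R hac α hα
      obtain ⟨δ, hδg, hδ⟩ := hg.lifts R hac β hβ
      exact ⟨δ, by rw [← Category.assoc, hδg, hβf], hδ⟩
  · -- strict base change
    intro X Y W Z sX sY hX hY f hf w hW c hc hflat hiso
    refine ⟨by simp only [Category.assoc], ?_, ?_⟩
    · -- η-étale
      show IsEtale (pullback.snd (c ≫ pullback.snd f w) (genFibTo v (w ≫ sX)))
      -- Step A : the second projection is η-étale
      have hcommA : (pullback.fst (w ≫ sX) (genPtTo v) ≫ w) ≫ sX =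
          pullback.snd (w ≫ sX) (genPtTo v) ≫ genPtTo v := by
        rw [Category.assoc, pullback.condition]
      set φ' : genFib v (w ≫ sX) ⟶ genFib v sX :=
        pullback.lift (pullback.fst (w ≫ sX) (genPtTo v) ≫ w)
          (pullback.snd (w ≫ sX) (genPtTo v)) hcommA with hφ'def
      have hφ' : φ' ≫ genFibTo v sX = genFibTo v (w ≫ sX) ≫ w := pullback.lift_fst _ _ _
      have hA' : Etale (pullback.snd f (genFibTo v (w ≫ sX) ≫ w)) := by
        rw [← hφ']; exact isEtale_snd_comp' _ _ _ hf.etaEtale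
      have hA : Etale (pullback.snd (pullback.snd f w) (genFibTo v (w ≫ sX))) := by
        rw [← pullbackLeftPullbackSndIso_hom_snd f w (genFibTo v (w ≫ sX))]
        infer_instance
      -- Step B : the closed immersion part is an iso on generic fibers
      have hB : IsIso (pullback.snd c
          (pullback.fst (pullback.snd f w) (genFibTo v (w ≫ sX)))) := by
        rw [← pullbackRightPullbackFstIso_hom_fst (w ≫ sX) (genPtTo v) (pullback.snd f w)]
        exact isIso_snd_comp' _ _ _ hiso
      have hB' : Etale (pullback.snd c
          (pullback.fst (pullback.snd f w) (genFibTo v (w ≫ sX)))) := inferInstance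
      rw [← pullbackRightPullbackFstIso_inv_snd_snd (pullback.snd f w) (genFibTo v (w ≫ sX)) c]
      delta IsEtale; infer_instance
    · -- lifting of admissible valuations
      intro R _ _ _ hac α hα
      obtain ⟨γW, hγW⟩ := hα
      set spm := Spec.map (CommRingCat.ofHom (algebraMap R (FractionRing R))) with hspm
      set δ : Spec (CommRingCat.of (FractionRing R)) ⟶ Spec (CommRingCat.of k) :=
        γW ≫ pullback.snd (w ≫ sX) (genPtTo v) with hδdef
      have hkey : δ ≫ genPtTo v = spm ≫ α ≫ w ≫ sX := by
        rw [hδdef, Category.assoc, ← pullback.condition, ← Category.assoc, hγW, Category.assoc]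
      -- α ≫ w is an admissible valuation of X
      have hαw : IsAdmVal v sX (α ≫ w) := by
        refine ⟨pullback.lift (spm ≫ α ≫ w) δ ?_, ?_⟩
        · rw [hkey]; simp only [Category.assoc]
        · rw [pullback.lift_fst]
      obtain ⟨b, hbf, hb⟩ := hf.lifts R hac (α ≫ w) hαw
      set lα : Spec (CommRingCat.of R) ⟶ pullback f w := pullback.lift b α hbf with hlαdef
      have hlα : lα ≫ pullback.snd f w = α := pullback.lift_snd _ _ _
      -- the generic point lifts into the generic fiber of the pullback
      have hμcomm : (spm ≫ lα) ≫ pullback.snd f w ≫ w ≫ sX = δ ≫ genPtTo v := by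
        rw [hkey]
        rw [Category.assoc, ← Category.assoc lα, hlα]
      set μ : Spec (CommRingCat.of (FractionRing R)) ⟶
          genFib v (pullback.snd f w ≫ w ≫ sX) :=
        pullback.lift (spm ≫ lα) δ hμcomm with hμdef
      have hμ : μ ≫ genFibTo v (pullback.snd f w ≫ w ≫ sX) = spm ≫ lα :=
        pullback.lift_fst _ _ _
      have : IsIso (pullback.snd c (genFibTo v (pullback.snd f w ≫ w ≫ sX))) := hiso
      set t : Spec (CommRingCat.of (FractionRing R)) ⟶ Z :=
        μ ≫ inv (pullback.snd c (genFibTo v (pullback.snd f w ≫ w ≫ sX))) ≫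
          pullback.fst c (genFibTo v (pullback.snd f w ≫ w ≫ sX)) with htdef
      have htc : t ≫ c = spm ≫ lα := by
        rw [htdef]
        simp only [Category.assoc, pullback.condition]
        rw [IsIso.inv_hom_id_assoc]
        exact hμ
      -- valuative criterion for the universally closed morphism c
      have hUC : UniversallyClosed c := inferInstance
      have hE : ValuativeCriterion.Existence c := by
        have h := hUC
        rw [UniversallyClosed.eq_valuativeCriterion] at h
        exact h.1
      have hS : (⟨R, FractionRing R, t, lα, ⟨htc⟩⟩ : ValuativeCommSq c).commSq.HasLift :=
        hE ⟨R, FractionRing R, t, lα, ⟨htc⟩⟩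
      obtain ⟨⟨l, hl1, hl2⟩⟩ := hS.exists_lift
      refine ⟨l, ?_, ?_⟩
      · rw [← Category.assoc, hl2, hlα]
      · refine ⟨pullback.lift (spm ≫ l) δ ?_, ?_⟩
        · rw [hkey]
          have h1 : (spm ≫ l) ≫ c ≫ pullback.snd f w ≫ w ≫ sX
              = spm ≫ (l ≫ c) ≫ pullback.snd f w ≫ w ≫ sX := by
            simp only [Category.assoc]
          rw [h1, hl2, reassoc_of% hlα]
        · rw [pullback.lift_fst]

end Altered
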